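/- Let n be a finite type, let X be a positive semidefinite matrix in Matrix n n ℂ, let P be an orthogonal projection such that (1 − P) * X * (1 − P) − (1 − P) is positive semidefinite (P is a pruning projector for X), let η ∈ (0,1), and let Y be a Hermitian matrix such that (1−η) • 1 − Y is positive semidefinite (Y ≤ (1−η)·1 in the Loewner order). Then Re Tr(1 − P) ≤ (1/η) · ‖X − Y‖₁. -/

import Mathlib

open Matrix
open scoped ComplexOrder

/-- Positive semidefinite square root, extended to a total function
(it agrees with `Matrix.PosSemidef.sqrt` on positive semidefinite matrices). -/
noncomputable def psqrt {n : Type*} [Fintype n] [DecidableEq n] (A : Matrix n n ℂ) :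
    Matrix n n ℂ :=
  open scoped Classical in
  if h : A.PosSemidef then (h.1.eigenvectorUnitary : Matrix n n ℂ) *
    diagonal ((↑) ∘ (√·) ∘ h.1.eigenvalues) * (star h.1.eigenvectorUnitary : Matrix n n ℂ) else 0

/-- The trace norm ‖A‖₁ = Re Tr √(AᴴA). -/
noncomputable def traceNorm {n : Type*} [Fintype n] [DecidableEq n] (A : Matrix n n ℂ) : ℝ :=
  (psqrt (Aᴴ * A)).trace.re

namespace PruneAux

variable {n : Type*} [Fintype n] [DecidableEq n]

lemma trace_re_nonneg {A : Matrix n n ℂ} (hA : A.PosSemidef) : 0 ≤ A.trace.re := by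
  have h : ∀ i, 0 ≤ (A i i).re := by
    intro i
    have h2 : (0 : ℂ) ≤ A i i := by
      exact hA.diag_nonneg
    exact (Complex.le_def.mp h2).1
  simpa [Matrix.trace, Matrix.diag, Complex.re_sum] using Finset.sum_nonneg fun i _ => h i

/-- For Hermitian `A`, an "absolute value" matrix `B` with `B` PSD, `B*B = Aᴴ*A`,
and `B - A` PSD. -/
lemma exists_abs {A : Matrix n n ℂ} (hA : A.IsHermitian) :
    ∃ B : Matrix n n ℂ, B.PosSemidef ∧ B * B = Aᴴ * A ∧ (B - A).PosSemidef := by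
  classical
  set U : Matrix n n ℂ := (hA.eigenvectorUnitary : Matrix n n ℂ) with hUdef
  have hUU : (star U) * U = 1 := Matrix.UnitaryGroup.star_mul_self hA.eigenvectorUnitary
  have key : ∀ d1 d2 : n → ℂ,
      (U * diagonal d1 * star U) * (U * diagonal d2 * star U)
        = U * diagonal (fun i => d1 i * d2 i) * star U := by
    intro d1 d2
    simp only [Matrix.mul_assoc]
    rw [← Matrix.mul_assoc (star U) U, hUU, Matrix.one_mul,
      ← Matrix.mul_assoc (diagonal d1), diagonal_mul_diagonal]
  set e : n → ℂ := RCLike.ofReal ∘ hA.eigenvalues with hedef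
  have hspec : A = U * diagonal e * star U := hA.spectral_theorem
  set d : n → ℂ := RCLike.ofReal ∘ (fun i => |hA.eigenvalues i|) with hddef
  refine ⟨U * diagonal d * star U, ?_, ?_, ?_⟩
  · have hdpos : PosSemidef (diagonal d) := by
      refine PosSemidef.diagonal ?_
      intro i
      show (0 : ℂ) ≤ d i
      exact RCLike.ofReal_nonneg.mpr (abs_nonneg _)
    simpa [Matrix.star_eq_conjTranspose] using hdpos.mul_mul_conjTranspose_same U
  · rw [hA.eq, key, hspec, key]
    have hfun : (fun i => d i * d i) = (fun i => e i * e i) := by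
      funext i
      simp only [hddef, hedef, Function.comp_apply, ← RCLike.ofReal_mul, abs_mul_abs_self]
    rw [hfun]
  · have heq : U * diagonal d * star U - A
        = U * diagonal (fun i => d i - e i) * star U := by
      nth_rewrite 1 [hspec]
      rw [← Matrix.sub_mul, ← Matrix.mul_sub, diagonal_sub]
    rw [heq]
    have hdpos : PosSemidef (diagonal (fun i => d i - e i)) := by
      refine PosSemidef.diagonal ?_
      intro i
      show (0 : ℂ) ≤ d i - e i
      have : d i - e i = RCLike.ofReal (|hA.eigenvalues i| - hA.eigenvalues i) := by
        simp [hddef, hedef, RCLike.ofReal_sub]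
      rw [this]
      exact RCLike.ofReal_nonneg.mpr (by simp [sub_nonneg, le_abs_self])
    simpa [Matrix.star_eq_conjTranspose] using hdpos.mul_mul_conjTranspose_same U

end PruneAux

/-- Deterministic core of the Pruning Trace Inequality (Lemma 4 of the paper): if `P` is a
pruning projector for the positive semidefinite matrix `X`, `η ∈ (0,1)` and `Y` is a
Hermitian matrix with `Y ≤ (1-η)·1` in the Loewner order, then
`Re Tr(1 - P) ≤ (1/η) ‖X - Y‖₁`. -/
theorem pruning_trace_inequality_det
    {n : Type*} [Fintype n] [DecidableEq n]
    (X : Matrix n n ℂ) (hX : X.PosSemidef)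
    (P : Matrix n n ℂ) (hP : Pᴴ = P ∧ P * P = P)
    (hprune : (((1 : Matrix n n ℂ) - P) * X * ((1 : Matrix n n ℂ) - P) -
        ((1 : Matrix n n ℂ) - P)).PosSemidef)
    (η : ℝ) (hη : η ∈ Set.Ioo (0 : ℝ) 1)
    (Y : Matrix n n ℂ) (hY : Y.IsHermitian)
    (hYle : ((1 - η) • (1 : Matrix n n ℂ) - Y).PosSemidef) :
    (((1 : Matrix n n ℂ) - P).trace).re ≤ (1 / η) * traceNorm (X - Y) := by
  classical
  obtain ⟨hPh, hPP⟩ := hP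
  obtain ⟨Q, hQdef⟩ : ∃ Q : Matrix n n ℂ, Q = 1 - P := ⟨_, rfl⟩
  rw [← hQdef] at hprune ⊢
  have hQh : Qᴴ = Q := by rw [hQdef]; simp [hPh]
  have hQQ : Q * Q = Q := by
    rw [hQdef]
    simp only [Matrix.sub_mul, Matrix.mul_sub, Matrix.one_mul, Matrix.mul_one, hPP]
    abel
  obtain ⟨A, hAdef⟩ : ∃ A : Matrix n n ℂ, A = X - Y := ⟨_, rfl⟩
  rw [← hAdef]
  have hAh : A.IsHermitian := hAdef ▸ hX.1.sub hY
  obtain ⟨B, hB, hB2, hBA⟩ := PruneAux.exists_abs hAh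
  have hAApsd : (Aᴴ * A).PosSemidef := Matrix.posSemidef_conjTranspose_mul_self A
  have htn : traceNorm A = B.trace.re := by
    have : B = psqrt (Aᴴ * A) := by
      have hsa : IsSelfAdjoint B := hB.1
      have hs : psqrt (Aᴴ * A) = cfc Real.sqrt (Aᴴ * A) := by
        rw [psqrt, dif_pos hAApsd, hAApsd.1.cfc_eq]
        rfl
      have hBB : B * B = cfc (fun x : ℝ => x * x) B := by
        rw [cfc_mul (fun x : ℝ => x) (fun x : ℝ => x) B, cfc_id' ℝ B hsa]
      rw [hs, ← hB2, hBB, ← cfc_comp Real.sqrt (fun x : ℝ => x * x) B hsa]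
      have hc : cfc (fun x : ℝ => Real.sqrt (x * x)) B = cfc (id : ℝ → ℝ) B := by
        apply cfc_congr
        intro x hx
        rw [hB.1.spectrum_real_eq_range_eigenvalues] at hx
        obtain ⟨i, rfl⟩ := hx
        exact Real.sqrt_mul_self (hB.eigenvalues_nonneg i)
      rw [Function.comp_def, hc, cfc_id ℝ B hsa]
    rw [traceNorm, ← this]
  -- Step 1 : η • Q ≤ Q * A * Q
  have hYQ : (Q * ((1 - η) • (1 : Matrix n n ℂ) - Y) * Q).PosSemidef := by
    have := hYle.mul_mul_conjTranspose_same Q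
    rwa [hQh] at this
  have hstep1 : (Q * A * Q - η • Q).PosSemidef := by
    have hsum := hprune.add hYQ
    have heq : Q * X * Q - Q + Q * ((1 - η) • (1 : Matrix n n ℂ) - Y) * Q
        = Q * A * Q - η • Q := by
      have h1 : Q * ((1 - η) • (1 : Matrix n n ℂ) - Y) * Q
          = Q - η • Q - Q * Y * Q := by
        rw [Matrix.mul_sub, Matrix.sub_mul, Matrix.mul_smul, Matrix.mul_one,
          Matrix.smul_mul, hQQ, sub_smul, one_smul]
      rw [h1, hAdef, Matrix.mul_sub, Matrix.sub_mul]
      abel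
    rwa [heq] at hsum
  -- η * Tr Q ≤ Re Tr (Q A Q) = Re Tr (A Q)
  have htr1 : η * Q.trace.re ≤ (A * Q).trace.re := by
    have h0 := PruneAux.trace_re_nonneg hstep1
    rw [Matrix.trace_sub, Matrix.trace_smul, Complex.sub_re, Complex.smul_re] at h0
    have hcyc : (Q * A * Q).trace = (A * Q).trace := by
      rw [Matrix.trace_mul_cycle, hQQ, Matrix.trace_mul_comm]
    rw [hcyc] at h0
    simp only [smul_eq_mul] at h0
    linarith
  -- Re Tr (A Q) ≤ Re Tr B
  have htrBQ : 0 ≤ ((B - A) * Q).trace.re := by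
    have hpsd : (Q * (B - A) * Q).PosSemidef := by
      have := hBA.mul_mul_conjTranspose_same Q
      rwa [hQh] at this
    have := PruneAux.trace_re_nonneg hpsd
    rwa [Matrix.trace_mul_cycle, hQQ, Matrix.trace_mul_comm] at this
  have htrBP : 0 ≤ (B * P).trace.re := by
    have hpsd : (P * B * P).PosSemidef := by
      have := hB.mul_mul_conjTranspose_same P
      rwa [hPh] at this
    have := PruneAux.trace_re_nonneg hpsd
    rwa [Matrix.trace_mul_cycle, hPP, Matrix.trace_mul_comm] at this
  have hsplit : B.trace = (B * Q).trace + (B * P).trace := by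
    rw [← Matrix.trace_add, ← Matrix.mul_add, hQdef, sub_add_cancel, Matrix.mul_one]
  have hAQle : (A * Q).trace.re ≤ B.trace.re := by
    have h1 : ((B - A) * Q).trace = (B * Q).trace - (A * Q).trace := by
      rw [Matrix.sub_mul, Matrix.trace_sub]
    rw [h1, Complex.sub_re] at htrBQ
    have h2 : B.trace.re = (B * Q).trace.re + (B * P).trace.re := by
      rw [hsplit, Complex.add_re]
    linarith
  -- combine
  obtain ⟨hη0, hη1⟩ := hη
  rw [htn]
  have hfinal : η * Q.trace.re ≤ B.trace.re := le_trans htr1 hAQle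
  calc Q.trace.re = (1 / η) * (η * Q.trace.re) := by field_simp
    _ ≤ (1 / η) * B.trace.re := by
        apply mul_le_mul_of_nonneg_left hfinal (by positivity)
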